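/- Let G be a group. The following are equivalent: (i) every bounded 2-cocycle c : G × G → ℝ is the coboundary db of some bounded function b : G → ℝ (i.e. the second bounded cohomology H_b²(G,ℝ) vanishes); (ii) for all g, h ∈ G, the element m₂(g,h) of ℓ¹(G×G) belongs to the closure of the ℝ-linear span of B₂ (i.e. the class g₂ ∈ H_b²(G, H̄₂^{ℓ¹}(G,ℝ)) vanishes). -/

import Mathlib

noncomputable section

open scoped ENNReal

instance : Fact ((1 : ℝ≥0∞) ≤ 1) := ⟨le_rfl⟩

/-- Dirac element of `ℓ¹(G×G)`. -/
def dirac {G : Type*} [Group G] (x : G × G) : lp (fun _ : G × G => ℝ) 1 :=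
  letI := Classical.decEq (G × G)
  lp.single 1 x 1

/-- `m(g) = Σ_{n≥1} 2⁻ⁿ · δ_{(g^{2^{n-1}}, g^{2^{n-1}})} ∈ ℓ¹(G×G)`. -/
def mm {G : Type*} [Group G] (g : G) : lp (fun _ : G × G => ℝ) 1 :=
  ∑' n : ℕ, ((1 : ℝ) / 2) ^ (n + 1) • dirac (g ^ 2 ^ n, g ^ 2 ^ n)

/-- `m₂(g,h) = δ_{(g,h)} − m(g) + m(gh) − m(h) ∈ ℓ¹(G×G)`. -/
def m2 {G : Type*} [Group G] (g h : G) : lp (fun _ : G × G => ℝ) 1 :=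
  dirac (g, h) - mm g + mm (g * h) - mm h

/-- The set of boundary elements of `ℓ¹(G×G)`. -/
def B2 (G : Type*) [Group G] : Set (lp (fun _ : G × G => ℝ) 1) :=
  {x | ∃ a b k : G, x = dirac (b, k) - dirac (a * b, k) + dirac (a, b * k) - dirac (a, b)}

/-- A bounded real 2-cocycle on a group `G` (normalized: vanishing when one argument is 1). -/
def IsBounded2Cocycle {G : Type*} [Group G] (c : G → G → ℝ) : Prop :=
  (∃ k : ℝ, ∀ g h : G, |c g h| ≤ k) ∧
  (∀ g h k : G, c h k - c (g * h) k + c g (h * k) - c g h = 0) ∧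
  (∀ g : G, c g 1 = 0) ∧ (∀ g : G, c 1 g = 0)


section Aux

variable {G : Type*} [Group G]

lemma norm_dirac (x : G × G) : ‖dirac x‖ = 1 := by
  letI := Classical.decEq (G × G)
  have := lp.norm_single (p := 1) (E := fun _ : G × G => ℝ) (by norm_num) x (1 : ℝ)
  exact this.trans (by norm_num)

lemma dirac_apply_self (x : G × G) : (dirac x : ∀ _ : G × G, ℝ) x = 1 := by
  letI := Classical.decEq (G × G)
  exact lp.single_apply_self 1 x 1

lemma dirac_apply_ne (x : G × G) {y : G × G} (h : y ≠ x) :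
    (dirac x : ∀ _ : G × G, ℝ) y = 0 := by
  letI := Classical.decEq (G × G)
  exact lp.single_apply_ne 1 x 1 h

lemma summable_mm (g : G) :
    Summable (fun n : ℕ => ((1 : ℝ) / 2) ^ (n + 1) • dirac (g ^ 2 ^ n, g ^ 2 ^ n)) := by
  apply Summable.of_norm
  have : ∀ n : ℕ, ‖((1 : ℝ) / 2) ^ (n + 1) • dirac (g ^ 2 ^ n, g ^ 2 ^ n)‖
      = ((1 : ℝ) / 2) ^ (n + 1) := by
    intro n
    rw [norm_smul, norm_dirac, mul_one, Real.norm_eq_abs, abs_pow]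
    norm_num
  rw [funext this]
  have hg : Summable (fun n : ℕ => ((1:ℝ)/2) ^ n) :=
    summable_geometric_of_lt_one (by norm_num) (by norm_num)
  exact (hg.mul_left ((1:ℝ)/2)).congr (fun n => by rw [pow_succ]; ring)

lemma clm_mm (f : lp (fun _ : G × G => ℝ) 1 →L[ℝ] ℝ) (g : G) :
    f (mm g) = ∑' n : ℕ, ((1 : ℝ) / 2) ^ (n + 1) * f (dirac (g ^ 2 ^ n, g ^ 2 ^ n)) := by
  rw [mm, f.map_tsum (summable_mm g)]
  simp [smul_eq_mul]

lemma summable_clm_mm (f : lp (fun _ : G × G => ℝ) 1 →L[ℝ] ℝ) (g : G) :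
    Summable (fun n : ℕ => ((1 : ℝ) / 2) ^ (n + 1) * f (dirac (g ^ 2 ^ n, g ^ 2 ^ n))) := by
  refine ((summable_mm g).map f f.continuous).congr fun n => ?_
  simp [Function.comp, map_smul, smul_eq_mul, one_div]

lemma lp_summable_norm (f : lp (fun _ : G × G => ℝ) 1) :
    Summable fun x => ‖f x‖ := by
  have := (lp.memℓp f).summable (p := 1) (by norm_num)
  simpa using this

lemma lp_hasSum_norm (f : lp (fun _ : G × G => ℝ) 1) :
    HasSum (fun x => ‖f x‖) ‖f‖ := by
  have := lp.hasSum_norm (p := 1) (by norm_num) f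
  simpa using this

lemma summable_pair {c : G × G → ℝ} {k : ℝ} (hc : ∀ x, |c x| ≤ k)
    (f : lp (fun _ : G × G => ℝ) 1) : Summable fun x => c x * f x := by
  apply Summable.of_norm
  refine Summable.of_nonneg_of_le (fun x => norm_nonneg _) (fun x => ?_)
    ((lp_summable_norm f).mul_left k)
  rw [norm_mul]
  exact mul_le_mul_of_nonneg_right (hc x) (norm_nonneg _)

/-- The pairing of a bounded function `c : G×G → ℝ` with `ℓ¹(G×G)`. -/
def pairing (c : G × G → ℝ) (k : ℝ) (hc : ∀ x, |c x| ≤ k) :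
    lp (fun _ : G × G => ℝ) 1 →L[ℝ] ℝ :=
  LinearMap.mkContinuous
    { toFun := fun f => ∑' x, c x * f x
      map_add' := by
        intro f g
        have h1 := summable_pair hc f
        have h2 := summable_pair hc g
        rw [← h1.tsum_add h2]
        refine tsum_congr fun x => ?_
        have : (↑(f + g) : ∀ _ : G × G, ℝ) x = f x + g x := by
          rw [lp.coeFn_add]; rfl
        rw [this]; ring
      map_smul' := by
        intro r f
        simp only [RingHom.id_apply, smul_eq_mul]
        rw [← tsum_mul_left]
        refine tsum_congr fun x => ?_
        have : (↑(r • f) : ∀ _ : G × G, ℝ) x = r * f x := by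
          rw [lp.coeFn_smul]; rfl
        rw [this]; ring } k
    (by
      intro f
      simp only [LinearMap.coe_mk, AddHom.coe_mk]
      calc ‖∑' x, c x * f x‖ ≤ ∑' x, ‖c x * f x‖ :=
            norm_tsum_le_tsum_norm (summable_pair hc f).norm
        _ ≤ ∑' x, k * ‖f x‖ := by
            refine Summable.tsum_le_tsum (fun x => ?_) (summable_pair hc f).norm
              ((lp_summable_norm f).mul_left k)
            rw [norm_mul]
            exact mul_le_mul_of_nonneg_right (hc x) (norm_nonneg _)
        _ = k * ‖f‖ := by rw [tsum_mul_left, (lp_hasSum_norm f).tsum_eq])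

lemma pairing_apply_dirac (c : G × G → ℝ) (k : ℝ) (hc : ∀ x, |c x| ≤ k) (x : G × G) :
    pairing c k hc (dirac x) = c x := by
  show (∑' y, c y * (dirac x : ∀ _ : G × G, ℝ) y) = c x
  rw [tsum_eq_single x (fun y hy => by rw [dirac_apply_ne x hy, mul_zero])]
  rw [dirac_apply_self, mul_one]

lemma tsum_half_pow : (∑' n : ℕ, ((1 : ℝ) / 2) ^ (n + 1)) = 1 := by
  have h : (∑' n : ℕ, ((1 : ℝ) / 2) ^ n) = 2 := by
    rw [tsum_geometric_of_lt_one (by norm_num) (by norm_num)]; norm_num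
  calc (∑' n : ℕ, ((1 : ℝ) / 2) ^ (n + 1))
      = ∑' n : ℕ, ((1 : ℝ) / 2) * ((1 : ℝ) / 2) ^ n := by
        refine tsum_congr fun n => ?_; rw [pow_succ]; ring
    _ = ((1 : ℝ) / 2) * ∑' n : ℕ, ((1 : ℝ) / 2) ^ n := tsum_mul_left
    _ = 1 := by rw [h]; norm_num

lemma telescope {b : G → ℝ} {K : ℝ} (hb : ∀ x, |b x| ≤ K) (g : G) :
    HasSum (fun n : ℕ => ((1 : ℝ) / 2) ^ (n + 1) *
      (b (g ^ 2 ^ n) - b (g ^ 2 ^ n * g ^ 2 ^ n) + b (g ^ 2 ^ n))) (b g) := by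
  have hK : 0 ≤ K := le_trans (abs_nonneg _) (hb 1)
  set a : ℕ → ℝ := fun n => ((1 : ℝ) / 2) ^ n * b (g ^ 2 ^ n) with ha
  have hsq : ∀ n : ℕ, g ^ 2 ^ n * g ^ 2 ^ n = g ^ 2 ^ (n + 1) := by
    intro n; rw [← pow_add, ← two_mul, ← pow_succ']
  have hterm : ∀ n : ℕ, ((1 : ℝ) / 2) ^ (n + 1) *
      (b (g ^ 2 ^ n) - b (g ^ 2 ^ n * g ^ 2 ^ n) + b (g ^ 2 ^ n)) = a n - a (n + 1) := by
    intro n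
    rw [hsq n, ha]
    simp only []
    rw [pow_succ]
    ring
  have habs : ∀ n : ℕ, |a n| ≤ K * ((1 : ℝ) / 2) ^ n := by
    intro n
    rw [ha]
    simp only []
    rw [abs_mul, abs_pow]
    have : |(1 : ℝ) / 2| = (1 : ℝ) / 2 := by norm_num
    rw [this]
    calc ((1:ℝ)/2) ^ n * |b (g ^ 2 ^ n)| ≤ ((1:ℝ)/2) ^ n * K :=
        mul_le_mul_of_nonneg_left (hb _) (by positivity)
      _ = K * ((1:ℝ)/2) ^ n := by ring
  have hsum : Summable (fun n : ℕ => a n - a (n + 1)) := by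
    apply Summable.of_norm
    refine Summable.of_nonneg_of_le (fun n => norm_nonneg _) (fun n => ?_)
      (((summable_geometric_of_lt_one (r := (1:ℝ)/2) (by norm_num) (by norm_num)).mul_left
        (2 * K)))
    calc ‖a n - a (n + 1)‖ ≤ |a n| + |a (n + 1)| := abs_sub _ _
      _ ≤ K * ((1:ℝ)/2) ^ n + K * ((1:ℝ)/2) ^ (n + 1) := add_le_add (habs n) (habs (n+1))
      _ ≤ 2 * K * ((1:ℝ)/2) ^ n := by
          rw [pow_succ]
          nlinarith [pow_nonneg (by norm_num : (0:ℝ) ≤ 1/2) n]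
  have ha0 : a 0 = b g := by rw [ha]; simp
  have hlim : Filter.Tendsto a Filter.atTop (nhds 0) := by
    have h1 : Filter.Tendsto (fun n : ℕ => K * ((1:ℝ)/2) ^ n) Filter.atTop (nhds 0) := by
      have := tendsto_pow_atTop_nhds_zero_of_lt_one (by norm_num : (0:ℝ) ≤ 1/2) (by norm_num)
      simpa using this.const_mul K
    exact squeeze_zero_norm (fun n => by rw [Real.norm_eq_abs]; exact habs n) h1
  rw [funext hterm, hsum.hasSum_iff_tendsto_nat]
  have hps : ∀ N : ℕ, ∑ n ∈ Finset.range N, (a n - a (n + 1)) = a 0 - a N := by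
    intro N; exact Finset.sum_range_sub' a N
  rw [funext hps, ← ha0]
  simpa using (tendsto_const_nhds (x := a 0)).sub hlim

lemma summable_half_pow : Summable (fun n : ℕ => ((1 : ℝ) / 2) ^ (n + 1)) := by
  have hg : Summable (fun n : ℕ => ((1:ℝ)/2) ^ n) :=
    summable_geometric_of_lt_one (by norm_num) (by norm_num)
  exact (hg.mul_left ((1:ℝ)/2)).congr (fun n => by rw [pow_succ]; ring)

lemma clm_mm_eq (f : lp (fun _ : G × G => ℝ) 1 →L[ℝ] ℝ) {b : G → ℝ} {K κ : ℝ}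
    (hb : ∀ x, |b x| ≤ K)
    (hf : ∀ x : G × G, f (dirac x) = b x.2 - b (x.1 * x.2) + b x.1 + κ) (g : G) :
    f (mm g) = b g + κ := by
  rw [clm_mm]
  have h1 : (fun n : ℕ => ((1:ℝ)/2) ^ (n+1) * f (dirac (g ^ 2 ^ n, g ^ 2 ^ n))) =
      fun n => ((1:ℝ)/2) ^ (n+1) * (b (g ^ 2 ^ n) - b (g ^ 2 ^ n * g ^ 2 ^ n) + b (g ^ 2 ^ n))
        + ((1:ℝ)/2) ^ (n+1) * κ := by
    funext n
    rw [hf (g ^ 2 ^ n, g ^ 2 ^ n)]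
    ring
  rw [h1, Summable.tsum_add (telescope hb g).summable (summable_half_pow.mul_right κ),
    (telescope hb g).tsum_eq, tsum_mul_right, tsum_half_pow, one_mul]

end Aux

/-- `H_b²(G,ℝ) = 0` (every bounded 2-cocycle is the coboundary of a bounded
function) if and only if the class `g₂` vanishes (every `m₂(g,h)` lies in the closure of
the span of the boundaries `B₂`). -/
theorem stmt_11 {G : Type*} [Group G] :
    (∀ c : G → G → ℝ, IsBounded2Cocycle c →
      ∃ b : G → ℝ, (∃ k : ℝ, ∀ x : G, |b x| ≤ k) ∧
        ∀ g h : G, c g h = b h - b (g * h) + b g) ↔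
    (∀ g h : G, m2 g h ∈
      closure ((Submodule.span ℝ (B2 G) : Submodule ℝ _) :
        Set (lp (fun _ : G × G => ℝ) 1))) := by
  constructor
  · -- (i) → (ii)
    intro h1 g h
    by_contra hx
    obtain ⟨f, u, hfu, hux⟩ := geometric_hahn_banach_closed_point
      ((Submodule.span ℝ (B2 G)).convex.closure) isClosed_closure hx
    -- f vanishes on the span
    have hf0 : ∀ y ∈ Submodule.span ℝ (B2 G), f y = 0 := by
      intro y hy
      by_contra hne
      have ht : ∀ t : ℝ, f (t • y) < u := fun t =>
        hfu _ (subset_closure (Submodule.smul_mem _ t hy))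
      have := ht ((u + 1) / f y)
      rw [map_smul, smul_eq_mul, div_mul_cancel₀ _ hne] at this
      linarith
    have hu0 : 0 < u := by
      have := hfu 0 (subset_closure (Submodule.zero_mem _))
      simpa using this
    -- the bounded "cocycle-up-to-constant" c
    set c : G × G → ℝ := fun x => f (dirac x) with hc
    set κ : ℝ := c (1, 1) with hκ
    have hrel : ∀ a b k : G,
        c (b, k) - c (a * b, k) + c (a, b * k) - c (a, b) = 0 := by
      intro a b k
      have hmem : dirac (b, k) - dirac (a * b, k) + dirac (a, b * k) - dirac (a, b)
          ∈ Submodule.span ℝ (B2 G) := Submodule.subset_span ⟨a, b, k, rfl⟩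
      have := hf0 _ hmem
      simpa [map_sub, map_add, hc] using this
    have hg1 : ∀ a : G, c (a, 1) = κ := by
      intro a
      have h2 := hrel a 1 1
      rw [mul_one a, one_mul (1 : G)] at h2
      rw [hκ]; linarith
    have h1g : ∀ a : G, c (1, a) = κ := by
      intro a
      have h2 := hrel 1 1 a
      rw [one_mul (1 : G), one_mul a] at h2
      rw [hκ]; linarith
    set c' : G → G → ℝ := fun a b => c (a, b) - κ with hc'
    have hbd : ∀ x : G × G, |c x| ≤ ‖f‖ := by
      intro x
      calc |c x| = ‖f (dirac x)‖ := rfl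
        _ ≤ ‖f‖ * ‖dirac x‖ := f.le_opNorm _
        _ = ‖f‖ := by rw [norm_dirac, mul_one]
    have hcoc' : IsBounded2Cocycle c' := by
      refine ⟨⟨‖f‖ + |κ|, fun a b => ?_⟩, fun a b k => ?_, fun a => ?_, fun a => ?_⟩
      · calc |c' a b| = |c (a, b) - κ| := rfl
          _ ≤ |c (a, b)| + |κ| := abs_sub _ _
          _ ≤ ‖f‖ + |κ| := add_le_add_left (hbd _) _
      · have := hrel a b k
        simp only [hc']
        linarith
      · simp only [hc', hg1 a, sub_self]
      · simp only [hc', h1g a, sub_self]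
    obtain ⟨b, ⟨K, hK⟩, heq⟩ := h1 c' hcoc'
    have hfd : ∀ x : G × G, f (dirac x) = b x.2 - b (x.1 * x.2) + b x.1 + κ := by
      intro x
      have h2 := heq x.1 x.2
      have h3 : c' x.1 x.2 = f (dirac x) - κ := by
        simp only [hc', hc, Prod.mk.eta]
      rw [h3] at h2
      linarith
    have hmmg := clm_mm_eq f hK hfd g
    have hmmgh := clm_mm_eq f hK hfd (g * h)
    have hmmh := clm_mm_eq f hK hfd h
    have hzero : f (m2 g h) = 0 := by
      rw [m2, map_sub, map_add, map_sub, hmmg, hmmgh, hmmh, hfd (g, h)]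
      ring
    have : u < 0 := by rw [← hzero]; exact hux
    linarith
  · -- (ii) → (i)
    intro h2 c hc
    obtain ⟨⟨K, hK⟩, hcoc, hg1, h1g⟩ := hc
    set cc : G × G → ℝ := fun x => c x.1 x.2 with hcc
    have hKcc : ∀ x : G × G, |cc x| ≤ K := fun x => hK x.1 x.2
    set φ := pairing cc K hKcc with hφ
    have hker : closure ((Submodule.span ℝ (B2 G) : Submodule ℝ _) :
        Set (lp (fun _ : G × G => ℝ) 1)) ⊆ (φ.ker : Set _) := by
      apply closure_minimal _ (ContinuousLinearMap.isClosed_ker φ)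
      have hle : Submodule.span ℝ (B2 G) ≤ φ.ker := by
        refine Submodule.span_le.2 ?_
        rintro y ⟨a, b, k, rfl⟩
        have : φ (dirac (b, k) - dirac (a * b, k) + dirac (a, b * k) - dirac (a, b)) = 0 := by
          rw [hφ, map_sub, map_add, map_sub, pairing_apply_dirac, pairing_apply_dirac,
            pairing_apply_dirac, pairing_apply_dirac]
          have := hcoc a b k
          simp only [hcc]
          linarith
        exact this
      exact fun y hy => hle hy
    set b : G → ℝ := fun g => φ (mm g) with hb
    have hfd : ∀ x : G × G, φ (dirac x) = cc x := fun x => by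
      rw [hφ]; exact pairing_apply_dirac cc K hKcc x
    refine ⟨b, ⟨K, fun g => ?_⟩, fun g h => ?_⟩
    · -- boundedness of b
      have hKpos : 0 ≤ K := le_trans (abs_nonneg _) (hK 1 1)
      have hsum := summable_clm_mm φ g
      calc |b g| = ‖∑' n : ℕ, ((1:ℝ)/2) ^ (n+1) * φ (dirac (g ^ 2 ^ n, g ^ 2 ^ n))‖ := by
            rw [hb]; simp only []; rw [clm_mm, Real.norm_eq_abs]
        _ ≤ ∑' n : ℕ, ‖((1:ℝ)/2) ^ (n+1) * φ (dirac (g ^ 2 ^ n, g ^ 2 ^ n))‖ :=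
            norm_tsum_le_tsum_norm hsum.norm
        _ ≤ ∑' n : ℕ, ((1:ℝ)/2) ^ (n+1) * K := by
            refine Summable.tsum_le_tsum (fun n => ?_) hsum.norm (summable_half_pow.mul_right K)
            rw [norm_mul, norm_pow]
            have h14 : ‖(1:ℝ)/2‖ = (1:ℝ)/2 := by rw [Real.norm_eq_abs]; norm_num
            rw [h14, hfd]
            exact mul_le_mul_of_nonneg_left (hKcc _) (by positivity)
        _ = K := by rw [tsum_mul_right, tsum_half_pow, one_mul]
    · -- the coboundary identity
      have hm : φ (m2 g h) = 0 := hker (h2 g h)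
      rw [m2, map_sub, map_add, map_sub, hfd (g, h)] at hm
      have : cc (g, h) = c g h := rfl
      rw [this] at hm
      simp only [hb]
      linarith
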